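/- Let r ≥ 2, θ a primitive r-th root of unity, and a an integer not divisible by r. Then θ^a/(1 − θ^a)² = Σ_{m=0}^{r−1} (m(r−m)/(2r)) θ^{am}. -/
import Mathlib


open Finset

lemma sum_pow_L1 (x : ℂ) (n : ℕ) :
    (1 - x) * ∑ m ∈ Finset.range n, (m : ℂ) * x ^ m =
      (∑ m ∈ Finset.range n, x ^ m) - 1 - ((n : ℂ) - 1) * x ^ n := by
  induction n with
  | zero => simp
  | succ k ih =>
    rw [Finset.sum_range_succ, Finset.sum_range_succ (f := fun m => x ^ m)]
    push_cast
    ring_nf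
    ring_nf at ih
    linear_combination ih

lemma sum_pow_L2 (x : ℂ) (n : ℕ) :
    (1 - x) * ∑ m ∈ Finset.range n, (m : ℂ) ^ 2 * x ^ m =
      2 * (∑ m ∈ Finset.range n, (m : ℂ) * x ^ m)
        - ((∑ m ∈ Finset.range n, x ^ m) - 1) - ((n : ℂ) - 1) ^ 2 * x ^ n := by
  induction n with
  | zero => simp
  | succ k ih =>
    rw [Finset.sum_range_succ, Finset.sum_range_succ (f := fun m => x ^ m),
      Finset.sum_range_succ (f := fun m => (m : ℂ) * x ^ m)]
    push_cast
    ring_nf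
    ring_nf at ih
    linear_combination ih

/-- for a primitive `r`-th root of unity `θ` and `r ∤ a`,
`θ^a/(1-θ^a)² = ∑_{m=0}^{r-1} (m(r-m)/(2r)) θ^{am}`. -/
theorem root_of_unity_identity (r : ℕ) (hr : 2 ≤ r) (θ : ℂ)
    (hθ : IsPrimitiveRoot θ r) (a : ℤ) (ha : ¬ (r : ℤ) ∣ a) :
    θ ^ a / (1 - θ ^ a) ^ 2 =
      ∑ m ∈ Finset.range r, ((m : ℂ) * ((r : ℂ) - m) / (2 * r)) * θ ^ (a * (m : ℤ)) := by
  have hθ0 : θ ≠ 0 := hθ.ne_zero (by omega)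
  set x : ℂ := θ ^ a with hx
  have hxr : x ^ r = 1 := by
    rw [hx, ← zpow_natCast (θ ^ a), ← zpow_mul, mul_comm, zpow_mul, zpow_natCast,
      hθ.pow_eq_one, one_zpow]
  have hx1 : x ≠ 1 := by
    rw [hx, Ne, hθ.zpow_eq_one_iff_dvd]
    exact ha
  have hu : (1 : ℂ) - x ≠ 0 := fun h => hx1 (by linear_combination -h)
  have hgeom : ∑ m ∈ Finset.range r, x ^ m = 0 := by
    rw [geom_sum_eq hx1, hxr, sub_self, zero_div]
  have hterm : ∀ m ∈ Finset.range r, θ ^ (a * (m : ℤ)) = x ^ m := by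
    intro m _
    rw [zpow_mul, hx, zpow_natCast]
  rw [Finset.sum_congr rfl (fun m hm => by rw [hterm m hm])]
  set S1 : ℂ := ∑ m ∈ Finset.range r, (m : ℂ) * x ^ m with hS1
  set S2 : ℂ := ∑ m ∈ Finset.range r, (m : ℂ) ^ 2 * x ^ m with hS2
  have h1 : (1 - x) * S1 = -(r : ℂ) := by
    rw [hS1, sum_pow_L1, hgeom, hxr]; ring
  have h2 : (1 - x) * S2 = 2 * S1 + 1 - ((r : ℂ) - 1) ^ 2 := by
    rw [hS2, sum_pow_L2, hgeom, hxr]; ring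
  have hsum : ∑ m ∈ Finset.range r, ((m : ℂ) * ((r : ℂ) - m) / (2 * r)) * x ^ m
      = ((r : ℂ) * S1 - S2) / (2 * r) := by
    rw [hS1, hS2, Finset.mul_sum, ← Finset.sum_sub_distrib, Finset.sum_div]
    exact Finset.sum_congr rfl fun m _ => by ring
  rw [hsum]
  have hr0 : (r : ℂ) ≠ 0 := Nat.cast_ne_zero.mpr (by omega)
  rw [div_eq_div_iff (pow_ne_zero 2 hu) (by simp [hr0])]
  linear_combination (-(r : ℂ) * (1 - x) + 2) * h1 + (1 - x) * h2
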